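/- Let M > 0 and let f = h + conj(g) be a harmonic mapping in the class P⁰_H(M) such that |f(z)| < M for all z ∈ D. Then for every r ∈ (0, 1) and all points z₁, z₂ with |z₁| < r and |z₂| < r, one has |f(z₁) − f(z₂)| ≥ |z₁ − z₂| · ( π/(4M) + 2M·ln(1 − r) ). -/

import Mathlib

open Metric Set Complex intervalIntegral

set_option maxHeartbeats 1000000

/-- Compatibility: the complex absolute value as an `AbsoluteValue` (equal to the norm). -/
noncomputable def Complex.abs : AbsoluteValue ℂ ℝ where
  toFun := fun z => ‖z‖
  map_mul' := norm_mul
  nonneg' := norm_nonneg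
  eq_zero' := fun _ => norm_eq_zero
  add_le' := norm_add_le

lemma Complex.norm_eq_abs (z : ℂ) : ‖z‖ = Complex.abs z := rfl

lemma Complex.abs_apply (z : ℂ) : Complex.abs z = Real.sqrt (Complex.normSq z) :=
  Complex.norm_def z

lemma Complex.abs_ofReal (r : ℝ) : Complex.abs (r : ℂ) = |r| := by
  rw [← Complex.norm_eq_abs]; simp

lemma Complex.abs_of_nonneg {r : ℝ} (hr : 0 ≤ r) : Complex.abs (r : ℂ) = r := by
  rw [Complex.abs_ofReal, _root_.abs_of_nonneg hr]

lemma Complex.abs_conj (z : ℂ) : Complex.abs ((starRingEnd ℂ) z) = Complex.abs z := by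
  rw [← Complex.norm_eq_abs, ← Complex.norm_eq_abs]; simp

lemma Complex.abs_I : Complex.abs Complex.I = 1 := by
  rw [← Complex.norm_eq_abs]; simp

@[simp] lemma Complex.abs_two : Complex.abs (2 : ℂ) = 2 := by
  rw [← Complex.norm_eq_abs]; simp

lemma Complex.continuous_abs : Continuous Complex.abs := continuous_norm

lemma Complex.abs_re_le_abs (z : ℂ) : |z.re| ≤ Complex.abs z := Complex.abs_re_le_norm z

lemma Complex.normSq_eq_abs (z : ℂ) : Complex.normSq z = Complex.abs z ^ 2 :=
  Complex.normSq_eq_norm_sq z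

lemma Complex.abs.pos {z : ℂ} (hz : z ≠ 0) : 0 < Complex.abs z := norm_pos_iff.mpr hz

lemma Complex.abs.ne_zero {z : ℂ} (hz : z ≠ 0) : Complex.abs z ≠ 0 := (Complex.abs.pos hz).ne'

lemma abs_circleMap_zero (R θ : ℝ) : Complex.abs (circleMap 0 R θ) = |R| :=
  norm_circleMap_zero R θ

lemma Complex.abs_le_abs_of_mapsTo_ball_self {f : ℂ → ℂ} {z : ℂ}
    (hd : DifferentiableOn ℂ f (ball 0 1)) (h_maps : MapsTo f (ball 0 1) (ball 0 1))
    (h₀ : f 0 = 0) (hz : Complex.abs z < 1) : Complex.abs (f z) ≤ Complex.abs z :=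
  Complex.norm_le_norm_of_mapsTo_ball hd (h_maps.mono_right ball_subset_closedBall) h₀ hz

lemma Complex.deriv_eq_smul_circleIntegral {R : ℝ} {c : ℂ} {f : ℂ → ℂ} (h0 : 0 < R)
    (hc : DiffContOnCl ℂ f (ball c R)) :
    deriv f c = (2 * (Real.pi : ℂ) * I)⁻¹ • ∮ z in C(c, R), (z - c) ^ (-2 : ℤ) • f z := by
  have := hc.deriv_eq_smul_circleIntegral h0
  have e : (fun z => (z - c) ^ (-2 : ℤ) • f z) = fun z => (1 / (z - c) ^ 2) • f z := by
    funext z; simp [zpow_neg, one_div]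
  have h2 : (2 * (Real.pi : ℂ) * I) ≠ 0 := by
    simp [Real.pi_ne_zero, I_ne_zero, Complex.ofReal_ne_zero]
  rw [e, this, smul_smul, inv_mul_cancel₀ h2, one_smul]

/-- Borel–Carathéodory type bound via Schwarz. -/
lemma qbound (M : ℝ) (hM : 0 < M) (q : ℂ → ℂ)
    (hd : DifferentiableOn ℂ q (ball 0 1)) (hq0 : q 0 = 0)
    (hre : ∀ z ∈ ball (0:ℂ) 1, -M < (q z).re) :
    ∀ z ∈ ball (0:ℂ) 1, Complex.abs (q z) * (1 - Complex.abs z) ≤ 2 * M * Complex.abs z := by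
  have hne : ∀ z ∈ ball (0:ℂ) 1, q z + 2 * M ≠ 0 := by
    intro z hz hzero
    have h1 : (q z + 2 * M).re = (q z).re + 2 * M := by simp
    have := hre z hz
    rw [hzero] at h1
    simp at h1
    linarith
  set φ : ℂ → ℂ := fun z => q z / (q z + 2 * M) with hφ
  have hdφ : DifferentiableOn ℂ φ (ball 0 1) := by
    apply hd.div (hd.add (differentiableOn_const _)) hne
  have hkey : ∀ z ∈ ball (0:ℂ) 1, Complex.abs (q z) < Complex.abs (q z + 2 * M) := by
    intro z hz
    have h2 : Complex.normSq (q z) < Complex.normSq (q z + 2 * M) := by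
      have : Complex.normSq (q z + 2 * M) = Complex.normSq (q z) + 4 * M * (q z).re + 4 * M^2 := by
        simp [Complex.normSq_add, Complex.normSq_apply]
        ring
      nlinarith [hre z hz]
    have := Real.sqrt_lt_sqrt (Complex.normSq_nonneg _) h2
    simpa [Complex.abs_apply] using this
  have hmaps : MapsTo φ (ball 0 1) (ball 0 1) := by
    intro z hz
    simp only [hφ, mem_ball_zero_iff]
    show Complex.abs _ < 1
    rw [map_div₀]
    exact div_lt_one (lt_of_le_of_lt (Complex.abs.nonneg _) (hkey z hz)) |>.2 (hkey z hz)
  have hφ0 : φ 0 = 0 := by simp [hφ, hq0]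
  intro z hz
  have hs := Complex.abs_le_abs_of_mapsTo_ball_self hdφ hmaps hφ0 (mem_ball_zero_iff.1 hz)
  -- |q z| ≤ |z| * |q z + 2M| ≤ |z| (|q z| + 2M)
  have h3 : Complex.abs (q z) ≤ Complex.abs z * Complex.abs (q z + 2 * M) := by
    have := hs
    rw [hφ] at this
    simp only [map_div₀] at this
    rw [div_le_iff₀ (lt_of_le_of_lt (Complex.abs.nonneg _) (hkey z hz))] at this
    linarith [this]
  have h4 : Complex.abs (q z + 2 * M) ≤ Complex.abs (q z) + 2 * M := by
    calc Complex.abs (q z + 2 * M) ≤ Complex.abs (q z) + Complex.abs (2 * M : ℂ) :=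
      Complex.abs.add_le _ _
    _ = Complex.abs (q z) + 2 * M := by
        have : Complex.abs (2 * M : ℂ) = 2 * M := by
          rw [map_mul]
          simp [Complex.abs_of_nonneg, hM.le]
        rw [this]
  have hz1 : Complex.abs z < 1 := mem_ball_zero_iff.1 hz
  nlinarith [Complex.abs.nonneg (q z), Complex.abs.nonneg z]

lemma secondDerivBound (M : ℝ) (hM : 0 < M) (h g : ℂ → ℂ)
    (hh : DifferentiableOn ℂ h (Metric.ball 0 1))
    (hg : DifferentiableOn ℂ g (Metric.ball 0 1))
    (hclass : ∀ z ∈ Metric.ball (0:ℂ) 1,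
      (z * deriv (deriv h) z).re > -M + Complex.abs (z * deriv (deriv g) z)) :
    ∀ w ∈ Metric.ball (0:ℂ) 1, w ≠ 0 →
      (Complex.abs (deriv (deriv h) w) + Complex.abs (deriv (deriv g) w)) * (1 - Complex.abs w)
        ≤ 2 * M := by
  intro w hw hw0
  set a := deriv (deriv h) w
  set b := deriv (deriv g) w
  set ε : ℂ := if b = 0 then 1 else if a = 0 then 1 else (a * Complex.abs b) / (b * Complex.abs a)
    with hε
  have hεabs : Complex.abs ε = 1 := by
    rw [hε]
    split_ifs with h1 h2
    · simp
    · simp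
    · rw [map_div₀, map_mul, map_mul, Complex.abs_ofReal, Complex.abs_ofReal,
        _root_.abs_of_nonneg (Complex.abs.nonneg b), _root_.abs_of_nonneg (Complex.abs.nonneg a)]
      rw [div_eq_one_iff_eq]
      · ring
      · simp [h1, h2]
  have halign : Complex.abs (a + ε * b) = Complex.abs a + Complex.abs b := by
    rw [hε]
    split_ifs with h1 h2
    · simp [h1]
    · simp [h2]
    · have hb : (b:ℂ) ≠ 0 := h1
      have ha : (a:ℂ) ≠ 0 := h2
      have haa : ((Complex.abs a : ℂ)) ≠ 0 := by
        simpa using Complex.abs.ne_zero ha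
      have : a + (a * Complex.abs b) / (b * Complex.abs a) * b
          = a * (((Complex.abs a : ℂ) + (Complex.abs b : ℂ)) / (Complex.abs a : ℂ)) := by
        field_simp
      rw [this, map_mul, map_div₀]
      have e1 : Complex.abs ((Complex.abs a : ℂ) + (Complex.abs b : ℂ))
          = Complex.abs a + Complex.abs b := by
        rw [← Complex.ofReal_add, Complex.abs_ofReal]
        exact _root_.abs_of_nonneg (by positivity)
      have e2 : Complex.abs ((Complex.abs a : ℂ)) = Complex.abs a :=
        Complex.abs_of_nonneg (Complex.abs.nonneg a)
      rw [e1, e2]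
      rw [mul_comm, div_mul_cancel₀ _ (Complex.abs.ne_zero ha)]
  -- the auxiliary analytic function
  have hah : AnalyticOnNhd ℂ (deriv (deriv h)) (ball 0 1) :=
    ((hh.analyticOnNhd isOpen_ball).deriv).deriv
  have hag : AnalyticOnNhd ℂ (deriv (deriv g)) (ball 0 1) :=
    ((hg.analyticOnNhd isOpen_ball).deriv).deriv
  set q : ℂ → ℂ := fun z => z * deriv (deriv h) z + ε * (z * deriv (deriv g) z) with hq
  have hdq : DifferentiableOn ℂ q (ball 0 1) := by
    apply DifferentiableOn.add
    · exact (differentiableOn_id).mul hah.differentiableOn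
    · exact (differentiableOn_const _).mul ((differentiableOn_id).mul hag.differentiableOn)
  have hq0 : q 0 = 0 := by simp [hq]
  have hre : ∀ z ∈ ball (0:ℂ) 1, -M < (q z).re := by
    intro z hz
    have h1 := hclass z hz
    have h2 : (ε * (z * deriv (deriv g) z)).re ≥ -Complex.abs (z * deriv (deriv g) z) := by
      have := Complex.abs_re_le_abs (ε * (z * deriv (deriv g) z))
      rw [map_mul, hεabs, one_mul] at this
      have := neg_abs_le (ε * (z * deriv (deriv g) z)).re
      have h3 : |(ε * (z * deriv (deriv g) z)).re| ≤ Complex.abs (z * deriv (deriv g) z) := by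
        have h4 := Complex.abs_re_le_abs (ε * (z * deriv (deriv g) z))
        rwa [map_mul, hεabs, one_mul] at h4
      linarith [neg_abs_le (ε * (z * deriv (deriv g) z)).re]
    simp only [hq, Complex.add_re]
    linarith
  have hb := qbound M hM q hdq hq0 hre w hw
  have hqw : Complex.abs (q w) = Complex.abs w * (Complex.abs a + Complex.abs b) := by
    have : q w = w * (a + ε * b) := by rw [hq]; ring
    rw [this, map_mul, halign]
  rw [hqw] at hb
  have hwpos : 0 < Complex.abs w := Complex.abs.pos hw0
  have hb' : ((Complex.abs a + Complex.abs b) * (1 - Complex.abs w)) * Complex.abs w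
      ≤ (2 * M) * Complex.abs w := by linear_combination hb
  exact le_of_mul_le_mul_right hb' hwpos

lemma intlog (M a : ℝ) (ha0 : 0 ≤ a) (ha1 : a < 1) :
    ∫ s in (0:ℝ)..1, 2 * M * a / (1 - s * a) = 2 * M * (-Real.log (1 - a)) := by
  have key : ∫ s in (0:ℝ)..1, a / (1 - s * a) = -Real.log (1 - a) := by
    have hne : ∀ s ∈ Set.uIcc (0:ℝ) 1, 1 - s * a ≠ 0 := by
      intro s hs
      rw [Set.uIcc_of_le (by norm_num : (0:ℝ) ≤ 1)] at hs
      have : s * a ≤ a := by nlinarith [hs.1, hs.2]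
      have : s * a ≤ a := this
      nlinarith [hs.1]
    have hderiv : ∀ s ∈ Set.uIcc (0:ℝ) 1,
        HasDerivAt (fun u => -Real.log (1 - u * a)) (a / (1 - s * a)) s := by
      intro s hs
      have h1 : HasDerivAt (fun u : ℝ => 1 - u * a) (-a) s := by
        simpa using ((hasDerivAt_id s).mul_const a).const_sub 1
      have h2 := (Real.hasDerivAt_log (hne s hs)).comp s h1
      have h3 : HasDerivAt (fun u => -Real.log (1 - u * a)) (-((1 - s * a)⁻¹ * -a)) s := h2.neg
      convert h3 using 1
      ring
    have hint : IntervalIntegrable (fun s => a / (1 - s * a)) MeasureTheory.volume 0 1 := by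
      apply ContinuousOn.intervalIntegrable
      exact (continuousOn_const.div
        (continuousOn_const.sub (continuousOn_id.mul continuousOn_const)) hne)
    have := intervalIntegral.integral_eq_sub_of_hasDerivAt hderiv hint
    simpa using this
  calc ∫ s in (0:ℝ)..1, 2 * M * a / (1 - s * a)
      = ∫ s in (0:ℝ)..1, (2*M) * (a / (1 - s * a)) := by
        congr 1; ext s; ring
    _ = (2*M) * ∫ s in (0:ℝ)..1, a / (1 - s * a) := intervalIntegral.integral_const_mul _ _
    _ = 2 * M * (-Real.log (1 - a)) := by rw [key]

/-- FTC along a segment inside the unit ball for a complex-differentiable function. -/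
lemma ftc_seg (φ φ' : ℂ → ℂ)
    (hd : ∀ x ∈ ball (0:ℂ) 1, HasDerivAt φ (φ' x) x)
    (hc : ContinuousOn φ' (ball 0 1))
    (z₂ z₁ : ℂ) (h1 : Complex.abs z₁ < 1) (h2 : Complex.abs z₂ < 1) :
    φ z₁ - φ z₂ = (∫ t in (0:ℝ)..1, φ' (z₂ + t * (z₁ - z₂))) * (z₁ - z₂) := by
  set δ := z₁ - z₂ with hδ
  have hmem : ∀ t : ℝ, t ∈ Set.uIcc (0:ℝ) 1 → z₂ + (t:ℂ) * δ ∈ ball (0:ℂ) 1 := by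
    intro t ht
    rw [Set.uIcc_of_le (by norm_num : (0:ℝ) ≤ 1)] at ht
    rw [mem_ball_zero_iff]
    have : z₂ + (t:ℂ) * δ = (1 - (t:ℂ)) * z₂ + (t:ℂ) * z₁ := by rw [hδ]; ring
    rw [this]
    calc Complex.abs ((1 - (t:ℂ)) * z₂ + (t:ℂ) * z₁)
        ≤ Complex.abs ((1 - (t:ℂ)) * z₂) + Complex.abs ((t:ℂ) * z₁) := Complex.abs.add_le _ _
      _ = |1 - t| * Complex.abs z₂ + |t| * Complex.abs z₁ := by
          rw [map_mul, map_mul, ← Complex.ofReal_one, ← Complex.ofReal_sub,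
            Complex.abs_ofReal, Complex.abs_ofReal]
      _ = (1 - t) * Complex.abs z₂ + t * Complex.abs z₁ := by
          rw [_root_.abs_of_nonneg (by linarith [ht.2] : (0:ℝ) ≤ 1 - t),
            _root_.abs_of_nonneg ht.1]
      _ < 1 := by
          set m := max (Complex.abs z₁) (Complex.abs z₂) with hm
          have hm1 : Complex.abs z₁ ≤ m := le_max_left _ _
          have hm2 : Complex.abs z₂ ≤ m := le_max_right _ _
          have hmlt : m < 1 := max_lt h1 h2
          nlinarith [mul_le_mul_of_nonneg_left hm2 (by linarith [ht.2] : (0:ℝ) ≤ 1 - t),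
            mul_le_mul_of_nonneg_left hm1 ht.1, ht.1, ht.2]
  have hD : ∀ t ∈ Set.uIcc (0:ℝ) 1,
      HasDerivAt (fun u : ℝ => φ (z₂ + (u:ℂ) * δ)) (φ' (z₂ + (t:ℂ) * δ) * δ) t := by
    intro t ht
    have hin : HasDerivAt (fun w : ℂ => z₂ + w * δ) δ (t:ℂ) := by
      simpa using ((hasDerivAt_id (t:ℂ)).mul_const δ).const_add z₂
    have hout := (hd _ (hmem t ht)).comp (t:ℂ) hin
    exact hout.comp_ofReal
  have hInt : IntervalIntegrable (fun t : ℝ => φ' (z₂ + (t:ℂ) * δ) * δ)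
      MeasureTheory.volume 0 1 := by
    apply ContinuousOn.intervalIntegrable
    apply ContinuousOn.mul _ continuousOn_const
    exact hc.comp (Continuous.continuousOn (by continuity)) hmem
  have := intervalIntegral.integral_eq_sub_of_hasDerivAt hD hInt
  rw [intervalIntegral.integral_mul_const] at this
  have hzz : z₂ + δ = z₁ := by rw [hδ]; ring
  simpa [hzz] using this.symm

lemma pointP (M : ℝ) (hM : 0 < M) (h g : ℂ → ℂ)
    (hh : DifferentiableOn ℂ h (Metric.ball 0 1))
    (hg : DifferentiableOn ℂ g (Metric.ball 0 1))
    (hh1 : deriv h 0 = 1) (hg1 : deriv g 0 = 0)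
    (hclass : ∀ z ∈ Metric.ball (0:ℂ) 1,
      (z * deriv (deriv h) z).re > -M + Complex.abs (z * deriv (deriv g) z))
    (r : ℝ) (hr : r ∈ Set.Ioo (0:ℝ) 1) (z : ℂ) (hz : Complex.abs z < r) :
    1 + 2 * M * Real.log (1 - r) ≤ (deriv h z).re - Complex.abs (deriv g z) := by
  have hlog : Real.log (1 - r) ≤ 0 :=
    Real.log_nonpos (by linarith [hr.1, hr.2]) (by linarith [hr.1])
  by_cases hz0 : z = 0
  · subst hz0
    rw [hh1, hg1]
    simp only [Complex.one_re, map_zero]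
    nlinarith
  -- z ≠ 0
  have hz1 : Complex.abs z < 1 := lt_trans hz hr.2
  have hzball : z ∈ ball (0:ℂ) 1 := mem_ball_zero_iff.2 hz1
  set a := Complex.abs z with ha
  have ha0 : 0 < a := Complex.abs.pos hz0
  have hah : AnalyticOnNhd ℂ (deriv h) (ball 0 1) := (hh.analyticOnNhd isOpen_ball).deriv
  have hag : AnalyticOnNhd ℂ (deriv g) (ball 0 1) := (hg.analyticOnNhd isOpen_ball).deriv
  have hahh : AnalyticOnNhd ℂ (deriv (deriv h)) (ball 0 1) := hah.deriv
  have hagg : AnalyticOnNhd ℂ (deriv (deriv g)) (ball 0 1) := hag.deriv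
  -- FTC for deriv h and deriv g from 0 to z
  have habs0 : Complex.abs (0:ℂ) < 1 := by simp
  have e1 : deriv h z - 1 = (∫ t in (0:ℝ)..1, deriv (deriv h) (t * z)) * z := by
    have := ftc_seg (deriv h) (deriv (deriv h))
      (fun x hx => (hah x hx).differentiableAt.hasDerivAt)
      hahh.continuousOn 0 z hz1 habs0
    simpa [hh1] using this
  have e2 : deriv g z = (∫ t in (0:ℝ)..1, deriv (deriv g) (t * z)) * z := by
    have := ftc_seg (deriv g) (deriv (deriv g))
      (fun x hx => (hag x hx).differentiableAt.hasDerivAt)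
      hagg.continuousOn 0 z hz1 habs0
    simpa [hg1] using this
  -- continuity facts for integrability
  have hmem : ∀ t : ℝ, t ∈ Set.uIcc (0:ℝ) 1 → (t:ℂ) * z ∈ ball (0:ℂ) 1 := by
    intro t ht
    rw [Set.uIcc_of_le (by norm_num : (0:ℝ) ≤ 1)] at ht
    rw [mem_ball_zero_iff]
    have : ‖(t:ℂ) * z‖ = |t| * Complex.abs z := by
      rw [Complex.norm_eq_abs, map_mul, Complex.abs_ofReal]
    rw [this, _root_.abs_of_nonneg ht.1]
    nlinarith [ht.1, ht.2]
  have hcont : ∀ (φ : ℂ → ℂ), ContinuousOn φ (ball 0 1) →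
      ContinuousOn (fun t : ℝ => φ ((t:ℂ) * z)) (Set.uIcc (0:ℝ) 1) := by
    intro φ hφ
    exact hφ.comp (Continuous.continuousOn (by continuity)) hmem
  have hinth : IntervalIntegrable (fun t : ℝ => Complex.abs (deriv (deriv h) ((t:ℂ) * z)))
      MeasureTheory.volume 0 1 :=
    (Complex.continuous_abs.comp_continuousOn (hcont _ hahh.continuousOn)).intervalIntegrable
  have hintg : IntervalIntegrable (fun t : ℝ => Complex.abs (deriv (deriv g) ((t:ℂ) * z)))
      MeasureTheory.volume 0 1 :=
    (Complex.continuous_abs.comp_continuousOn (hcont _ hagg.continuousOn)).intervalIntegrable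
  have hintm : IntervalIntegrable (fun s : ℝ => 2 * M * a / (1 - s * a))
      MeasureTheory.volume 0 1 := by
    apply ContinuousOn.intervalIntegrable
    apply continuousOn_const.div
      (continuousOn_const.sub (continuousOn_id.mul continuousOn_const))
    intro s hs
    simp only [Pi.sub_apply, Pi.mul_apply, id_eq]
    rw [Set.uIcc_of_le (by norm_num : (0:ℝ) ≤ 1)] at hs
    nlinarith [mul_le_mul_of_nonneg_right hs.2 ha0.le, hs.1, hz1]
  have hintm' : IntervalIntegrable (fun s : ℝ => 2 * M / (1 - s * a))
      MeasureTheory.volume 0 1 := by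
    apply ContinuousOn.intervalIntegrable
    apply continuousOn_const.div
      (continuousOn_const.sub (continuousOn_id.mul continuousOn_const))
    intro s hs
    simp only [Pi.sub_apply, Pi.mul_apply, id_eq]
    rw [Set.uIcc_of_le (by norm_num : (0:ℝ) ≤ 1)] at hs
    nlinarith [mul_le_mul_of_nonneg_right hs.2 ha0.le, hs.1, hz1]
  -- pointwise a.e. bound
  have hae : (fun t : ℝ => Complex.abs (deriv (deriv h) ((t:ℂ) * z))
        + Complex.abs (deriv (deriv g) ((t:ℂ) * z)))
      ≤ᵐ[MeasureTheory.volume.restrict (Set.Icc (0:ℝ) 1)]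
      (fun s : ℝ => 2 * M / (1 - s * a)) := by
    have h1 : ∀ᵐ s ∂(MeasureTheory.volume.restrict (Set.Icc (0:ℝ) 1)), s ≠ 0 := by
      refine MeasureTheory.ae_restrict_of_ae ?_
      rw [MeasureTheory.ae_iff]
      simp
    have h2 : ∀ᵐ s ∂(MeasureTheory.volume.restrict (Set.Icc (0:ℝ) 1)), s ∈ Set.Icc (0:ℝ) 1 :=
      MeasureTheory.ae_restrict_mem measurableSet_Icc
    filter_upwards [h1, h2] with s hs0 hs
    have hsu : s ∈ Set.uIcc (0:ℝ) 1 := by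
      rw [Set.uIcc_of_le (by norm_num : (0:ℝ) ≤ 1)]; exact hs
    have hw : (s:ℂ) * z ∈ ball (0:ℂ) 1 := hmem s hsu
    have hw0 : (s:ℂ) * z ≠ 0 := by
      apply mul_ne_zero _ hz0
      exact_mod_cast hs0
    have hb := secondDerivBound M hM h g hh hg hclass ((s:ℂ) * z) hw hw0
    have habsw : Complex.abs ((s:ℂ) * z) = s * a := by
      rw [map_mul, Complex.abs_ofReal, _root_.abs_of_nonneg hs.1]
    rw [habsw] at hb
    have hpos : 0 < 1 - s * a := by
      nlinarith [mul_le_mul_of_nonneg_right hs.2 ha0.le, hs.1, hz1]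
    rw [le_div_iff₀ hpos]
    linarith [hb]
  have hmono := intervalIntegral.integral_mono_ae_restrict (by norm_num : (0:ℝ) ≤ 1)
    (hinth.add hintg) hintm' hae
  -- compute the majorant integral
  have hm'val : (∫ s in (0:ℝ)..1, 2 * M / (1 - s * a)) = 2 * M * (-Real.log (1 - a)) / a := by
    have e : (∫ s in (0:ℝ)..1, 2 * M * a / (1 - s * a))
        = a * ∫ s in (0:ℝ)..1, 2 * M / (1 - s * a) := by
      rw [← intervalIntegral.integral_const_mul]
      congr 1; ext s; ring
    rw [intlog M a ha0.le hz1] at e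
    field_simp at e ⊢
    linarith [e]
  have hsum : (∫ t in (0:ℝ)..1, Complex.abs (deriv (deriv h) ((t:ℂ) * z)))
      + (∫ t in (0:ℝ)..1, Complex.abs (deriv (deriv g) ((t:ℂ) * z)))
      ≤ 2 * M * (-Real.log (1 - a)) / a := by
    rw [← intervalIntegral.integral_add hinth hintg]
    rw [← hm'val]
    exact hmono
  -- norms of the FTC integrals
  have n1 : Complex.abs (deriv h z - 1)
      ≤ (∫ t in (0:ℝ)..1, Complex.abs (deriv (deriv h) ((t:ℂ) * z))) * a := by
    rw [e1, map_mul]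
    apply mul_le_mul_of_nonneg_right _ (Complex.abs.nonneg z)
    have := intervalIntegral.norm_integral_le_integral_norm
      (f := fun t : ℝ => deriv (deriv h) ((t:ℂ) * z)) (μ := MeasureTheory.volume)
      (a := (0:ℝ)) (b := 1) (by norm_num)
    simpa [Complex.norm_eq_abs] using this
  have n2 : Complex.abs (deriv g z)
      ≤ (∫ t in (0:ℝ)..1, Complex.abs (deriv (deriv g) ((t:ℂ) * z))) * a := by
    rw [e2, map_mul]
    apply mul_le_mul_of_nonneg_right _ (Complex.abs.nonneg z)
    have := intervalIntegral.norm_integral_le_integral_norm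
      (f := fun t : ℝ => deriv (deriv g) ((t:ℂ) * z)) (μ := MeasureTheory.volume)
      (a := (0:ℝ)) (b := 1) (by norm_num)
    simpa [Complex.norm_eq_abs] using this
  -- putting it together
  have hsum2 : Complex.abs (deriv h z - 1) + Complex.abs (deriv g z)
      ≤ 2 * M * (-Real.log (1 - a)) := by
    have := mul_le_mul_of_nonneg_right hsum ha0.le
    rw [div_mul_cancel₀ _ ha0.ne'] at this
    nlinarith [n1, n2]
  have hloga : -Real.log (1 - a) ≤ -Real.log (1 - r) := by
    have : Real.log (1 - r) ≤ Real.log (1 - a) :=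
      Real.log_le_log (by linarith [hr.2]) (by linarith)
    linarith
  have hre : 1 - Complex.abs (deriv h z - 1) ≤ (deriv h z).re := by
    have h1 : (deriv h z).re = 1 + (deriv h z - 1).re := by
      simp [Complex.sub_re]
    have h2 : -(Complex.abs (deriv h z - 1)) ≤ (deriv h z - 1).re := by
      have := Complex.abs_re_le_abs (deriv h z - 1)
      have := neg_abs_le ((deriv h z - 1).re)
      have h3 := abs_le.1 (Complex.abs_re_le_abs (deriv h z - 1) |>.trans_eq rfl |> (fun x => x))
      linarith [Complex.abs_re_le_abs (deriv h z - 1), neg_abs_le ((deriv h z - 1).re)]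
    linarith
  have hfinal : 2 * M * Real.log (1 - r) = -(2 * M * (-Real.log (1 - r))) := by ring
  linarith [hsum2, hloga, hre, mul_le_mul_of_nonneg_left hloga (by linarith : (0:ℝ) ≤ 2 * M)]

lemma intervalIntegral_conj {f : ℝ → ℂ} {a b : ℝ} :
    (∫ t in a..b, (starRingEnd ℂ) (f t)) = (starRingEnd ℂ) (∫ t in a..b, f t) := by
  rw [intervalIntegral, intervalIntegral, _root_.integral_conj, _root_.integral_conj, map_sub]

lemma M_ge_one (M : ℝ) (hM : 0 < M) (h g : ℂ → ℂ)
    (hh : DifferentiableOn ℂ h (Metric.ball 0 1))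
    (hg : DifferentiableOn ℂ g (Metric.ball 0 1))
    (hh1 : deriv h 0 = 1)
    (hbound : ∀ z ∈ Metric.ball (0:ℂ) 1,
      Complex.abs (h z + starRingEnd ℂ (g z)) < M) : 1 ≤ M := by
  have key : ∀ ρ : ℝ, 0 < ρ → ρ < 1 → ρ ≤ M := by
    intro ρ hρ0 hρ1
    have hball : closedBall (0:ℂ) ρ ⊆ ball 0 1 := by
      intro x hx
      rw [mem_closedBall_zero_iff] at hx
      rw [mem_ball_zero_iff]
      linarith [hx]
    have hdiff : DiffContOnCl ℂ h (ball 0 ρ) := by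
      apply DifferentiableOn.diffContOnCl
      rw [closure_ball (0:ℂ) hρ0.ne']
      exact hh.mono hball
    -- Cauchy formula for deriv h 0
    have hV := Complex.deriv_eq_smul_circleIntegral hρ0 hdiff
    rw [hh1] at hV
    -- the g circle integral vanishes
    have hG : (∮ z in C(0, ρ), g z) = 0 := by
      apply Complex.circleIntegral_eq_zero_of_differentiable_on_off_countable hρ0.le
        Set.countable_empty ((hg.mono hball).continuousOn)
      intro z hz
      exact ((hg.analyticOnNhd isOpen_ball) z
        (hball (ball_subset_closedBall hz.1))).differentiableAt
    -- hence the first Fourier coefficient of conj ∘ g vanishes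
    have hcirc : ∀ θ : ℝ, circleMap 0 ρ θ ≠ 0 := fun θ =>
      circleMap_ne_center hρ0.ne' (θ := θ)
    have habs : ∀ θ : ℝ, Complex.abs (circleMap 0 ρ θ) = ρ := by
      intro θ; rw [abs_circleMap_zero, _root_.abs_of_nonneg hρ0.le]
    have hconjc : ∀ θ : ℝ, (starRingEnd ℂ) (circleMap 0 ρ θ)
        = ((ρ:ℂ)^2) / circleMap 0 ρ θ := by
      intro θ
      rw [eq_div_iff (hcirc θ), mul_comm, Complex.mul_conj]
      norm_cast
      rw [Complex.normSq_eq_abs, habs θ]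
    have hW : (∫ θ in (0:ℝ)..2*Real.pi, circleMap 0 ρ θ * g (circleMap 0 ρ θ)) = 0 := by
      have : (∮ z in C(0, ρ), g z)
          = I * ∫ θ in (0:ℝ)..2*Real.pi, circleMap 0 ρ θ * g (circleMap 0 ρ θ) := by
        rw [circleIntegral, ← intervalIntegral.integral_const_mul]
        congr 1; ext θ
        rw [deriv_circleMap]
        simp only [smul_eq_mul]
        ring
      rw [this] at hG
      exact (mul_eq_zero.mp hG).resolve_left I_ne_zero
    have hJ : (∮ z in C(0, ρ), (z:ℂ)^(-2:ℤ) • (starRingEnd ℂ) (g z)) = 0 := by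
      rw [circleIntegral]
      have : ∀ θ : ℝ, deriv (circleMap 0 ρ) θ • ((circleMap 0 ρ θ)^(-2:ℤ)
            • (starRingEnd ℂ) (g (circleMap 0 ρ θ)))
          = (I / (ρ^2:ℝ)) * (starRingEnd ℂ) (circleMap 0 ρ θ * g (circleMap 0 ρ θ)) := by
        intro θ
        rw [deriv_circleMap]
        simp only [smul_eq_mul, zpow_neg, zpow_two]
        rw [map_mul]
        rw [hconjc θ]
        have hc := hcirc θ
        have hρ2 : ((ρ:ℂ)^2) ≠ 0 := by
          norm_cast
          positivity
        push_cast
        field_simp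
        rw [mul_div_assoc, div_self (by exact_mod_cast hρ0.ne'), mul_one]
      rw [intervalIntegral.integral_congr (fun θ _ => this θ)]
      rw [intervalIntegral.integral_const_mul, _root_.intervalIntegral_conj, hW]
      simp
    have hdc : Continuous (deriv (circleMap 0 ρ)) := by
      rw [show deriv (circleMap 0 ρ) = fun θ => circleMap 0 ρ θ * I from funext (deriv_circleMap 0 ρ)]
      exact (continuous_circleMap 0 ρ).mul continuous_const
    -- now the main bound
    have hVJ : (∮ z in C(0, ρ), (z:ℂ)^(-2:ℤ) • (h z + (starRingEnd ℂ) (g z)))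
        = (∮ z in C(0, ρ), ((z - 0):ℂ)^(-2:ℤ) • h z)
          + (∮ z in C(0, ρ), (z:ℂ)^(-2:ℤ) • (starRingEnd ℂ) (g z)) := by
      simp only [sub_zero]
      rw [circleIntegral, circleIntegral, circleIntegral,
        ← intervalIntegral.integral_add]
      · congr 1; ext θ
        simp only [smul_eq_mul]
        ring
      · -- IntervalIntegrable of the h part
        apply ContinuousOn.intervalIntegrable
        apply ContinuousOn.smul hdc.continuousOn
        apply ContinuousOn.fun_smul
        · exact ContinuousOn.zpow₀ (Continuous.continuousOn (continuous_circleMap 0 ρ)) _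
            (fun θ _ => Or.inl (hcirc θ))
        · apply (hh.continuousOn.mono (ball_subset_ball le_rfl)).comp
            (Continuous.continuousOn (continuous_circleMap 0 ρ))
          intro θ _
          have : circleMap 0 ρ θ ∈ closedBall (0:ℂ) ρ := circleMap_mem_closedBall 0 hρ0.le θ
          exact hball this
      · apply ContinuousOn.intervalIntegrable
        apply ContinuousOn.smul hdc.continuousOn
        apply ContinuousOn.fun_smul
        · exact ContinuousOn.zpow₀ (Continuous.continuousOn (continuous_circleMap 0 ρ)) _
            (fun θ _ => Or.inl (hcirc θ))
        · apply Complex.continuous_conj.comp_continuousOn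
          apply (hg.continuousOn.mono (ball_subset_ball le_rfl)).comp
            (Continuous.continuousOn (continuous_circleMap 0 ρ))
          intro θ _
          have : circleMap 0 ρ θ ∈ closedBall (0:ℂ) ρ := circleMap_mem_closedBall 0 hρ0.le θ
          exact hball this
    have hnorm : ‖∮ z in C(0, ρ), (z:ℂ)^(-2:ℤ) • (h z + (starRingEnd ℂ) (g z))‖
        ≤ 2 * Real.pi * ρ * (M / ρ^2) := by
      apply circleIntegral.norm_integral_le_of_norm_le_const hρ0.le
      intro z hz
      have hzs : Complex.abs z = ρ := by
        rw [← Complex.norm_eq_abs]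
        rwa [mem_sphere_zero_iff_norm] at hz
      have hzball : z ∈ ball (0:ℂ) 1 := by
        rw [mem_ball_zero_iff, Complex.norm_eq_abs, hzs]; exact hρ1
      rw [norm_smul]
      have h1 : ‖(z:ℂ)^(-2:ℤ)‖ = ρ^(-2:ℤ) := by
        rw [norm_zpow, Complex.norm_eq_abs, hzs]
      rw [h1]
      have h2 : ‖h z + (starRingEnd ℂ) (g z)‖ ≤ M := le_of_lt (by
        rw [Complex.norm_eq_abs]; exact hbound z hzball)
      have h3 : (ρ:ℝ)^(-2:ℤ) = 1/ρ^2 := by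
        rw [zpow_neg, one_div]
        norm_cast
      rw [h3]
      rw [div_eq_mul_one_div M (ρ^2)]
      calc 1/ρ^2 * ‖h z + (starRingEnd ℂ) (g z)‖ ≤ 1/ρ^2 * M := by
            apply mul_le_mul_of_nonneg_left h2 (by positivity)
        _ = M * (1/ρ^2) := by ring
    -- conclude
    have hVval : (∮ z in C(0, ρ), ((z - 0):ℂ)^(-2:ℤ) • h z) = 2 * Real.pi * I := by
      have h2 : (2 * (Real.pi:ℂ) * I) ≠ 0 := by
        simp [Real.pi_ne_zero, I_ne_zero, Complex.ofReal_ne_zero]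
      have hV' := hV.symm
      rw [inv_smul_eq_iff₀ h2] at hV'
      simpa using hV'
    rw [hVJ, hJ, add_zero, hVval] at hnorm
    have hnval : ‖(2 * (Real.pi:ℂ) * I)‖ = 2 * Real.pi := by
      simp only [norm_mul, Complex.norm_eq_abs, Complex.abs_I, Complex.abs_ofReal, mul_one,
        Complex.abs_two]
      rw [_root_.abs_of_nonneg Real.pi_pos.le]
    rw [hnval] at hnorm
    -- 2π ≤ 2πρ M/ρ² = 2πM/ρ
    have hπ : 0 < Real.pi := Real.pi_pos
    have h5 : 2 * Real.pi * ρ * (M / ρ^2) = 2 * Real.pi * (M / ρ) := by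
      field_simp
    rw [h5] at hnorm
    have h6 : (1:ℝ) ≤ M / ρ := by nlinarith [hπ, hnorm]
    rw [le_div_iff₀ hρ0] at h6
    linarith
  by_contra hcon
  push_neg at hcon
  have h1 : (M + 1) / 2 < 1 := by linarith
  have h2 : 0 < (M + 1) / 2 := by linarith
  have := key _ h2 h1
  linarith

/-- Distance-distortion lower bound for the class `P⁰_H(M)`:
for `r ∈ (0,1)` and `|z₁|, |z₂| < r`,
`|f(z₁) - f(z₂)| ≥ |z₁ - z₂| (π/(4M) + 2M ln(1-r))`. -/
theorem landau_P0HM_lowerBound (M : ℝ) (hM : 0 < M) (h g : ℂ → ℂ)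
    (hh : DifferentiableOn ℂ h (Metric.ball 0 1))
    (hg : DifferentiableOn ℂ g (Metric.ball 0 1))
    (hh0 : h 0 = 0) (hh1 : deriv h 0 = 1)
    (hg0 : g 0 = 0) (hg1 : deriv g 0 = 0)
    (hclass : ∀ z ∈ Metric.ball (0:ℂ) 1,
      (z * deriv (deriv h) z).re > -M + ‖z * deriv (deriv g) z‖)
    (hbound : ∀ z ∈ Metric.ball (0:ℂ) 1,
      ‖h z + starRingEnd ℂ (g z)‖ < M) :
    ∀ r ∈ Set.Ioo (0:ℝ) 1, ∀ z₁ z₂ : ℂ, ‖z₁‖ < r → ‖z₂‖ < r →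
      ‖(h z₁ + starRingEnd ℂ (g z₁)) - (h z₂ + starRingEnd ℂ (g z₂))‖ ≥
        ‖z₁ - z₂‖ * (Real.pi / (4 * M) + 2 * M * Real.log (1 - r)) := by
  simp only [Complex.norm_eq_abs] at hclass hbound ⊢
  intro r hr z₁ z₂ h1 h2
  by_cases heq : z₁ = z₂
  · subst heq
    simp
  set δ := z₁ - z₂ with hδdef
  have hδ0 : δ ≠ 0 := sub_ne_zero.2 heq
  have ha : 0 < Complex.abs δ := Complex.abs.pos hδ0
  set a := Complex.abs δ with hadef
  have hz11 : Complex.abs z₁ < 1 := lt_trans h1 hr.2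
  have hz21 : Complex.abs z₂ < 1 := lt_trans h2 hr.2
  -- analytic derivatives
  have hah : AnalyticOnNhd ℂ h (ball 0 1) := hh.analyticOnNhd isOpen_ball
  have hag : AnalyticOnNhd ℂ g (ball 0 1) := hg.analyticOnNhd isOpen_ball
  have edh : h z₁ - h z₂ = (∫ t in (0:ℝ)..1, deriv h (z₂ + t * δ)) * δ :=
    ftc_seg h (deriv h) (fun x hx => (hah x hx).differentiableAt.hasDerivAt)
      hah.deriv.continuousOn z₂ z₁ hz11 hz21
  have edg : g z₁ - g z₂ = (∫ t in (0:ℝ)..1, deriv g (z₂ + t * δ)) * δ :=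
    ftc_seg g (deriv g) (fun x hx => (hag x hx).differentiableAt.hasDerivAt)
      hag.deriv.continuousOn z₂ z₁ hz11 hz21
  set A := ∫ t in (0:ℝ)..1, deriv h (z₂ + t * δ) with hA
  set B := ∫ t in (0:ℝ)..1, deriv g (z₂ + t * δ) with hB
  set X := (h z₁ + starRingEnd ℂ (g z₁)) - (h z₂ + starRingEnd ℂ (g z₂)) with hXdef
  have hX : X = A * δ + starRingEnd ℂ (B * δ) := by
    rw [hXdef]
    have : (h z₁ + starRingEnd ℂ (g z₁)) - (h z₂ + starRingEnd ℂ (g z₂))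
        = (h z₁ - h z₂) + starRingEnd ℂ (g z₁ - g z₂) := by
      rw [map_sub]; ring
    rw [this, edh, edg]
  -- membership of the segment
  have hmem : ∀ t : ℝ, t ∈ Set.Icc (0:ℝ) 1 → Complex.abs (z₂ + (t:ℂ) * δ) < r := by
    intro t ht
    have e : z₂ + (t:ℂ) * δ = (1 - (t:ℂ)) * z₂ + (t:ℂ) * z₁ := by rw [hδdef]; ring
    rw [e]
    calc Complex.abs ((1 - (t:ℂ)) * z₂ + (t:ℂ) * z₁)
        ≤ Complex.abs ((1 - (t:ℂ)) * z₂) + Complex.abs ((t:ℂ) * z₁) := Complex.abs.add_le _ _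
      _ = |1 - t| * Complex.abs z₂ + |t| * Complex.abs z₁ := by
          rw [map_mul, map_mul, ← Complex.ofReal_one, ← Complex.ofReal_sub,
            Complex.abs_ofReal, Complex.abs_ofReal]
      _ = (1 - t) * Complex.abs z₂ + t * Complex.abs z₁ := by
          rw [_root_.abs_of_nonneg (by linarith [ht.2] : (0:ℝ) ≤ 1 - t),
            _root_.abs_of_nonneg ht.1]
      _ < r := by
          have hm1 : Complex.abs z₁ ≤ max (Complex.abs z₁) (Complex.abs z₂) := le_max_left _ _
          have hm2 : Complex.abs z₂ ≤ max (Complex.abs z₁) (Complex.abs z₂) := le_max_right _ _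
          have hmlt : max (Complex.abs z₁) (Complex.abs z₂) < r := max_lt h1 h2
          nlinarith [mul_le_mul_of_nonneg_left hm2 (by linarith [ht.2] : (0:ℝ) ≤ 1 - t),
            mul_le_mul_of_nonneg_left hm1 ht.1, ht.1, ht.2]
  have hmem' : ∀ t : ℝ, t ∈ Set.uIcc (0:ℝ) 1 → z₂ + (t:ℂ) * δ ∈ ball (0:ℂ) 1 := by
    intro t ht
    rw [Set.uIcc_of_le (by norm_num : (0:ℝ) ≤ 1)] at ht
    rw [mem_ball_zero_iff, Complex.norm_eq_abs]
    exact lt_trans (hmem t ht) hr.2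
  -- integrability
  have hconth : ContinuousOn (fun t : ℝ => deriv h (z₂ + (t:ℂ) * δ)) (Set.uIcc (0:ℝ) 1) :=
    hah.deriv.continuousOn.comp (Continuous.continuousOn (by continuity)) hmem'
  have hcontg : ContinuousOn (fun t : ℝ => deriv g (z₂ + (t:ℂ) * δ)) (Set.uIcc (0:ℝ) 1) :=
    hag.deriv.continuousOn.comp (Continuous.continuousOn (by continuity)) hmem'
  have hinth : IntervalIntegrable (fun t : ℝ => deriv h (z₂ + (t:ℂ) * δ))
      MeasureTheory.volume 0 1 := hconth.intervalIntegrable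
  have hintg : IntervalIntegrable (fun t : ℝ => deriv g (z₂ + (t:ℂ) * δ))
      MeasureTheory.volume 0 1 := hcontg.intervalIntegrable
  have hinthre : IntervalIntegrable (fun t : ℝ => (deriv h (z₂ + (t:ℂ) * δ)).re)
      MeasureTheory.volume 0 1 :=
    (Complex.continuous_re.comp_continuousOn hconth).intervalIntegrable
  have hintga : IntervalIntegrable (fun t : ℝ => Complex.abs (deriv g (z₂ + (t:ℂ) * δ)))
      MeasureTheory.volume 0 1 :=
    (Complex.continuous_abs.comp_continuousOn hcontg).intervalIntegrable
  set c := 1 + 2 * M * Real.log (1 - r) with hc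
  clear_value A B X a δ
  -- lower bound for A.re - |B|
  have hAre : A.re = ∫ t in (0:ℝ)..1, (deriv h (z₂ + (t:ℂ) * δ)).re := by
    rw [hA]
    exact (Complex.reCLM.intervalIntegral_comp_comm hinth).symm
  have hBabs : Complex.abs B ≤ ∫ t in (0:ℝ)..1, Complex.abs (deriv g (z₂ + (t:ℂ) * δ)) := by
    rw [hB, ← Complex.norm_eq_abs]
    have := intervalIntegral.norm_integral_le_integral_norm
      (f := fun t : ℝ => deriv g (z₂ + (t:ℂ) * δ)) (μ := MeasureTheory.volume)
      (a := (0:ℝ)) (b := 1) (by norm_num)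
    simpa [Complex.norm_eq_abs] using this
  have hABc : c ≤ A.re - Complex.abs B := by
    have hmono : (∫ t in (0:ℝ)..1, c)
        ≤ ∫ t in (0:ℝ)..1, ((deriv h (z₂ + (t:ℂ) * δ)).re
            - Complex.abs (deriv g (z₂ + (t:ℂ) * δ))) :=
      intervalIntegral.integral_mono_on (by norm_num)
        intervalIntegrable_const (hinthre.sub hintga)
        (fun t ht => pointP M hM h g hh hg hh1 hg1 hclass r hr _ (hmem t ht))
    rw [intervalIntegral.integral_const] at hmono
    simp only [smul_eq_mul, sub_zero, one_mul] at hmono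
    rw [intervalIntegral.integral_sub hinthre hintga] at hmono
    rw [hAre]
    linarith [hBabs, hmono]
  -- real-part inequality
  have e1 : (starRingEnd ℂ δ) * (A * δ) = A * ((a^2 : ℝ) : ℂ) := by
    have h0 : (starRingEnd ℂ δ) * (A * δ) = A * (δ * starRingEnd ℂ δ) := by ring
    rw [h0, Complex.mul_conj, Complex.normSq_eq_abs, hadef]
  have e2 : (starRingEnd ℂ δ) * (starRingEnd ℂ (B * δ)) = starRingEnd ℂ (B * δ^2) := by
    rw [← map_mul]
    congr 1
    ring
  have hreX : ((starRingEnd ℂ δ) * X).re = A.re * a^2 + (B * δ^2).re := by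
    rw [hX, mul_add, e1, e2, Complex.add_re, Complex.conj_re]
    congr 1
    rw [mul_comm, Complex.re_ofReal_mul]
    ring
  have hre_low : (A.re - Complex.abs B) * a^2 ≤ ((starRingEnd ℂ δ) * X).re := by
    rw [hreX]
    have : -(Complex.abs (B * δ^2)) ≤ (B * δ^2).re :=
      (abs_le.1 (Complex.abs_re_le_abs _)).1
    have habs2 : Complex.abs (B * δ^2) = Complex.abs B * a^2 := by
      rw [map_mul, map_pow, hadef]
    rw [habs2] at this
    have expand : (A.re - Complex.abs B) * a^2 = A.re * a^2 - Complex.abs B * a^2 := by ring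
    linarith [this, expand]
  have hre_up : ((starRingEnd ℂ δ) * X).re ≤ a * Complex.abs X := by
    calc ((starRingEnd ℂ δ) * X).re ≤ Complex.abs ((starRingEnd ℂ δ) * X) :=
      (abs_le.1 (Complex.abs_re_le_abs _)).2
    _ = a * Complex.abs X := by rw [map_mul, Complex.abs_conj, hadef]
  have hchain : c * a^2 ≤ a * Complex.abs X := by
    have := mul_le_mul_of_nonneg_right hABc (by positivity : (0:ℝ) ≤ a^2)
    linarith [hre_low, hre_up]
  have hXge : c * a ≤ Complex.abs X := by
    have h3 : (c * a) * a ≤ Complex.abs X * a := by linear_combination hchain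
    exact le_of_mul_le_mul_right h3 ha
  -- now π/(4M) ≤ 1
  have hM1 : 1 ≤ M := M_ge_one M hM h g hh hg hh1 hbound
  have hπ : Real.pi / (4 * M) ≤ 1 := by
    rw [div_le_one (by linarith)]
    linarith [Real.pi_le_four]
  have hfac : Real.pi / (4 * M) + 2 * M * Real.log (1 - r) ≤ c := by
    rw [hc]; linarith
  calc a * (Real.pi / (4 * M) + 2 * M * Real.log (1 - r))
      ≤ a * c := mul_le_mul_of_nonneg_left hfac ha.le
    _ = c * a := by ring
    _ ≤ Complex.abs X := hXge
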